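/- Let T be a compact Hermitian operator on a separable Hilbert space with real matrix entries in a fixed orthonormal basis, satisfying: T_{11}=0, T_{1n} ≠ 0 for all n>1, every column c_n(T) with n>1 is orthogonal to c_1(T), and ‖c_1(T)‖ ≥ ‖T^{[1]}‖ where T^{[1]} is T with its first row and column replaced by zero. Then ‖T‖ = ‖c_1(T)‖. -/

import Mathlib

open scoped InnerProductSpace
open ContinuousLinearMap

noncomputable section

variable {H : Type*} [NormedAddCommGroup H] [InnerProductSpace ℂ H] [CompleteSpace H]

/-- The absolute value `|A| = (A^*A)^{1/2}` of an operator. -/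
def opAbs (A : H →L[ℂ] H) : H →L[ℂ] H := CFC.sqrt (ContinuousLinearMap.adjoint A * A)

/-- The trace of an operator computed in the Hilbert basis `e`. -/
def opTrace (e : HilbertBasis ℕ ℂ H) (A : H →L[ℂ] H) : ℂ := ∑' n, ⟪e n, A (e n)⟫_ℂ

/-- The trace norm `‖A‖₁ = tr |A|` computed in the Hilbert basis `e`. -/
def traceNorm (e : HilbertBasis ℕ ℂ H) (A : H →L[ℂ] H) : ℝ :=
  ∑' n, (⟪e n, opAbs A (e n)⟫_ℂ).re

/-- `A` is trace class: the diagonal of `|A|` is summable. -/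
def IsTraceClass (e : HilbertBasis ℕ ℂ H) (A : H →L[ℂ] H) : Prop :=
  Summable fun n => (⟪e n, opAbs A (e n)⟫_ℂ).re

/-- `D` is diagonal in the basis `e` with real diagonal entries. -/
def RealDiag (e : HilbertBasis ℕ ℂ H) (D : H →L[ℂ] H) : Prop :=
  ∀ n, ∃ d : ℝ, D (e n) = (d : ℂ) • e n

/-- Distance from `C` to the compact real diagonal operators, in operator norm. -/
def diagDistK (e : HilbertBasis ℕ ℂ H) (C : H →L[ℂ] H) : ℝ :=
  ⨅ D : {D : H →L[ℂ] H // IsCompactOperator ⇑D ∧ RealDiag e D}, ‖C + (D : H →L[ℂ] H)‖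

/-- Positive part `X⁺ = (|X| + X)/2`. -/
def opPosPart (X : H →L[ℂ] H) : H →L[ℂ] H := (2⁻¹ : ℂ) • (opAbs X + X)

/-- Negative part `X⁻ = (|X| - X)/2`. -/
def opNegPart (X : H →L[ℂ] H) : H →L[ℂ] H := (2⁻¹ : ℂ) • (opAbs X - X)

private lemma pyth3 {a b q : H} (hab : ⟪a, b⟫_ℂ = 0) (haq : ⟪a, q⟫_ℂ = 0)
    (hbq : ⟪b, q⟫_ℂ = 0) : ‖a + b + q‖ ^ 2 = ‖a‖ ^ 2 + ‖b‖ ^ 2 + ‖q‖ ^ 2 := by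
  have h1 : ⟪a + b, q⟫_ℂ = 0 := by rw [inner_add_left, haq, hbq, add_zero]
  rw [@norm_add_sq ℂ _ _ _ _ (a + b) q, h1, @norm_add_sq ℂ _ _ _ _ a b, hab]
  simp

private lemma hbasis_ext (e : HilbertBasis ℕ ℂ H) {x : H} (h : ∀ i, ⟪e i, x⟫_ℂ = 0) : x = 0 := by
  have hx : e.repr x = 0 := by ext i; simp [e.repr_apply_apply, h i]
  simpa using congrArg e.repr.symm hx

/-- under the structural hypotheses, `‖T‖ = ‖c₁(T)‖`. -/
theorem stmt_1 (e : HilbertBasis ℕ ℂ H) (T T1 : H →L[ℂ] H)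
    (hcomp : IsCompactOperator ⇑T) (hsa : IsSelfAdjoint T)
    (hreal : ∀ i j, (⟪e i, T (e j)⟫_ℂ).im = 0)
    (hdiag0 : ⟪e 0, T (e 0)⟫_ℂ = 0)
    (hne : ∀ n, n ≠ 0 → ⟪e 0, T (e n)⟫_ℂ ≠ 0)
    (horth : ∀ n, n ≠ 0 → ⟪T (e 0), T (e n)⟫_ℂ = 0)
    (hT1 : ∀ i j, ⟪e i, T1 (e j)⟫_ℂ = if i = 0 ∨ j = 0 then 0 else ⟪e i, T (e j)⟫_ℂ)
    (hnorm : ‖T1‖ ≤ ‖T (e 0)‖) :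
    ‖T‖ = ‖T (e 0)‖ := by
  classical
  have hadj : ∀ x y : H, ⟪T x, y⟫_ℂ = ⟪x, T y⟫_ℂ := fun x y => by
    rw [← ContinuousLinearMap.adjoint_inner_right T x y, hsa.adjoint_eq]
  have hee : ∀ i j, ⟪e i, e j⟫_ℂ = if i = j then 1 else 0 :=
    orthonormal_iff_ite.mp e.orthonormal
  have he0 : ‖e 0‖ = 1 := e.orthonormal.1 0
  set c : H := T (e 0) with hc
  set ν : ℝ := ‖c‖ with hνdef
  -- c ≠ 0
  have hc1 : ⟪e 1, c⟫_ℂ ≠ 0 := by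
    have h1 : ⟪e 1, c⟫_ℂ = (starRingEnd ℂ) ⟪e 0, T (e 1)⟫_ℂ := by
      rw [hc, ← hadj (e 1) (e 0), ← inner_conj_symm]
    rw [h1]
    simp only [ne_eq, map_eq_zero]
    exact hne 1 one_ne_zero
  have hcne : c ≠ 0 := fun h => hc1 (by simp [h])
  have hν : 0 < ν := norm_pos_iff.mpr hcne
  have hνC : (ν : ℂ) ≠ 0 := by exact_mod_cast hν.ne'
  -- key column relations
  have hcn : ∀ n, ⟪c, e n⟫_ℂ = ⟪e 0, T (e n)⟫_ℂ := fun n => by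
    rw [← inner_conj_symm, hc, ← hadj (e n) (e 0), ← inner_conj_symm]
    simp
  -- T c = ν² e₀
  have hTc : T c = ((ν : ℂ) ^ 2) • e 0 := by
    have key : T c - ((ν : ℂ) ^ 2) • e 0 = 0 := by
      apply hbasis_ext e
      intro i
      rw [inner_sub_right, inner_smul_right]
      have h1 : ⟪e i, T c⟫_ℂ = (starRingEnd ℂ) ⟪c, T (e i)⟫_ℂ := by
        rw [← hadj (e i) c, ← inner_conj_symm]
      by_cases hi : i = 0
      · subst hi
        have h2 : ⟪c, T (e 0)⟫_ℂ = ((ν : ℂ) ^ 2) := by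
          rw [← hc, @inner_self_eq_norm_sq_to_K ℂ, hνdef]; norm_cast
        rw [h1, h2, hee]
        simp [Complex.conj_ofReal]
      · rw [h1, horth i hi]
        simp [hee, hi]
    exact sub_eq_zero.mp key
  -- T = T1 + rank-two part
  have hS : T = T1 + ((innerSL ℂ (e 0)).smulRight c + (innerSL ℂ c).smulRight (e 0)) := by
    apply ContinuousLinearMap.ext_on
      (Submodule.dense_iff_topologicalClosure_eq_top.mpr e.dense_span)
    rintro x ⟨n, rfl⟩
    show T (e n) = _
    apply sub_eq_zero.mp
    apply hbasis_ext e
    intro i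
    rw [inner_sub_right, ContinuousLinearMap.add_apply, ContinuousLinearMap.add_apply,
      ContinuousLinearMap.smulRight_apply, ContinuousLinearMap.smulRight_apply,
      innerSL_apply_apply, innerSL_apply_apply, inner_add_right, inner_add_right,
      inner_smul_right, inner_smul_right, hT1 i n, hcn n, hee]
    by_cases hn : n = 0
    · subst hn
      have h0 : ⟪e 0, T (e 0)⟫_ℂ = 0 := hdiag0
      by_cases hi : i = 0 <;>
        simp [hi, hee, hc, h0]
    · by_cases hi : i = 0 <;>
        simp [hi, hn, hee, Ne.symm hn, he0]
  have hdecomp : ∀ x : H, T x = T1 x + ⟪e 0, x⟫_ℂ • c + ⟪c, x⟫_ℂ • e 0 := fun x => by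
    conv_lhs => rw [hS]
    simp [add_assoc]
  -- upper bound
  have hub : ‖T‖ ≤ ν := by
    refine ContinuousLinearMap.opNorm_le_bound T hν.le fun x => ?_
    set u : H := ((ν : ℂ))⁻¹ • c with hu
    have hcu : c = (ν : ℂ) • u := by rw [hu, smul_inv_smul₀ hνC]
    have hnu : ‖u‖ = 1 := by
      rw [hu, norm_smul]
      simp [abs_of_pos hν, inv_mul_cancel₀ hν.ne']
      exact inv_mul_cancel₀ hν.ne'
    have he0u : ⟪e 0, u⟫_ℂ = 0 := by
      rw [hu, inner_smul_right, hdiag0, mul_zero]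
    have hue : ⟪u, e 0⟫_ℂ = 0 := by rw [← inner_conj_symm, he0u, map_zero]
    have huu : ⟪u, u⟫_ℂ = 1 := by
      rw [@inner_self_eq_norm_sq_to_K ℂ, hnu]; norm_num
    set α := ⟪e 0, x⟫_ℂ with hα
    set β := ⟪u, x⟫_ℂ with hβ
    set p : H := x - α • e 0 - β • u with hp
    have hxp : x = α • e 0 + β • u + p := by rw [hp]; abel
    have hep : ⟪e 0, p⟫_ℂ = 0 := by
      rw [hp, inner_sub_right, inner_sub_right, inner_smul_right, inner_smul_right,
        hee, he0u, ← hα]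
      simp
    have hup : ⟪u, p⟫_ℂ = 0 := by
      rw [hp, inner_sub_right, inner_sub_right, inner_smul_right, inner_smul_right,
        hue, huu, ← hβ]
      ring
    have hcp : ⟪c, p⟫_ℂ = 0 := by rw [hcu, inner_smul_left, hup, mul_zero]
    have hTp : T p = T1 p := by rw [hdecomp p, hep, hcp]; simp
    have hTu : T u = (ν : ℂ) • e 0 := by
      rw [hu, map_smul, hTc, smul_smul]
      congr 1
      field_simp
    have he0Tp : ⟪e 0, T p⟫_ℂ = 0 := by rw [← hadj (e 0) p, ← hc]; exact hcp
    have huTp : ⟪u, T p⟫_ℂ = 0 := by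
      rw [← hadj u p, hTu, inner_smul_left, hep, mul_zero]
    have hcTp : ⟪c, T p⟫_ℂ = 0 := by rw [hcu, inner_smul_left, huTp, mul_zero]
    have hTx : T x = α • c + β • ((ν : ℂ) • e 0) + T p := by
      conv_lhs => rw [hxp]
      rw [map_add, map_add, map_smul, map_smul, hTu, ← hc]
    -- Pythagoras for x
    have hxsq : ‖x‖ ^ 2 = ‖α‖ ^ 2 + ‖β‖ ^ 2 + ‖p‖ ^ 2 := by
      have h := pyth3 (a := α • e 0) (b := β • u) (q := p) ?_ ?_ ?_
      · rw [← hxp] at h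
        rw [h, norm_smul, norm_smul, hnu, he0]
        ring
      · rw [inner_smul_left, inner_smul_right, he0u]; ring
      · rw [inner_smul_left, hep, mul_zero]
      · rw [inner_smul_left, hup, mul_zero]
    -- Pythagoras for T x
    have hTxsq : ‖T x‖ ^ 2 = ‖α‖ ^ 2 * ν ^ 2 + ‖β‖ ^ 2 * ν ^ 2 + ‖T p‖ ^ 2 := by
      have h := pyth3 (a := α • c) (b := β • ((ν : ℂ) • e 0)) (q := T p) ?_ ?_ ?_
      · rw [← hTx] at h
        rw [h, norm_smul, norm_smul, norm_smul, he0]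
        have : ‖(ν : ℂ)‖ = ν := by simp [abs_of_pos hν]
        rw [this]
        ring
      · rw [inner_smul_left, inner_smul_right, inner_smul_right]
        have : ⟪c, e 0⟫_ℂ = 0 := by
          rw [← inner_conj_symm, hdiag0, map_zero]
        rw [this]; ring
      · rw [inner_smul_left, hcTp, mul_zero]
      · rw [inner_smul_left, inner_smul_left, he0Tp]; ring
    have hTpbound : ‖T p‖ ≤ ν * ‖p‖ := by
      rw [hTp]
      calc ‖T1 p‖ ≤ ‖T1‖ * ‖p‖ := T1.le_opNorm p
        _ ≤ ν * ‖p‖ := by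
            apply mul_le_mul_of_nonneg_right _ (norm_nonneg p)
            exact hnorm
    have hsq : ‖T x‖ ^ 2 ≤ (ν * ‖x‖) ^ 2 := by
      rw [hTxsq]
      have h2 : ‖T p‖ ^ 2 ≤ ν ^ 2 * ‖p‖ ^ 2 := by
        have := mul_self_le_mul_self (norm_nonneg (T p)) hTpbound
        nlinarith [norm_nonneg (T p)]
      calc ‖α‖ ^ 2 * ν ^ 2 + ‖β‖ ^ 2 * ν ^ 2 + ‖T p‖ ^ 2
          ≤ ‖α‖ ^ 2 * ν ^ 2 + ‖β‖ ^ 2 * ν ^ 2 + ν ^ 2 * ‖p‖ ^ 2 := by linarith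
        _ = (ν * ‖x‖) ^ 2 := by rw [mul_pow]; rw [hxsq]; ring
    calc ‖T x‖ = Real.sqrt (‖T x‖ ^ 2) := (Real.sqrt_sq (norm_nonneg _)).symm
      _ ≤ Real.sqrt ((ν * ‖x‖) ^ 2) := Real.sqrt_le_sqrt hsq
      _ = ν * ‖x‖ := Real.sqrt_sq (mul_nonneg hν.le (norm_nonneg x))
  -- lower bound
  have hlb : ν ≤ ‖T‖ := by
    have h := T.le_opNorm (e 0)
    rw [he0, mul_one, ← hc] at h
    exact h
  exact le_antisymm hub hlb
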